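/- Let M ≥ 1 be a real number and let a : ℤ → ℝ be a strictly increasing sequence with a(n) → +∞ as n → +∞ and a(n) → −∞ as n → −∞, satisfying: for all n ∈ ℤ and all integers k ≥ 1, a(n) − a(n−k) ≤ M·(a(n+k) − a(n)) and a(n+k) − a(n) ≤ M·(a(n) − a(n−k)). Define φ : ℝ → ℝ by φ(x) = a(⌊x⌋) + (a(⌊x⌋+1) − a(⌊x⌋))·(x − ⌊x⌋). Then φ(n) = a(n) for every n ∈ ℤ, and φ is C(M)-quasisymmetric with C(M) = M⁴ + M³ + M² + M; that is, for every x ∈ ℝ and every t > 0, φ(x) − φ(x−t) ≤ C(M)·(φ(x+t) − φ(x)) and φ(x+t) − φ(x) ≤ C(M)·(φ(x) − φ(x−t)). -/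

import Mathlib

open Filter

set_option maxHeartbeats 1000000 in
/-- The piecewise linear interpolation `φ` of a two-sided unbounded strictly increasing
sequence `a : ℤ → ℝ` satisfying the discrete `M`-quasisymmetry condition interpolates `a`
at the integers and is `C(M)`-quasisymmetric with `C(M) = M⁴ + M³ + M² + M`. -/
theorem stmt_3 (M : ℝ) (hM : 1 ≤ M) (a : ℤ → ℝ) (ha : StrictMono a)
    (htop : Tendsto a atTop atTop) (hbot : Tendsto a atBot atBot)
    (hqs : ∀ n k : ℤ, 1 ≤ k →
      a n - a (n - k) ≤ M * (a (n + k) - a n) ∧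
      a (n + k) - a n ≤ M * (a n - a (n - k)))
    (φ : ℝ → ℝ)
    (hφ : ∀ x : ℝ, φ x = a ⌊x⌋ + (a (⌊x⌋ + 1) - a ⌊x⌋) * (x - ⌊x⌋)) :
    (∀ n : ℤ, φ n = a n) ∧
    ∀ x t : ℝ, 0 < t →
      φ x - φ (x - t) ≤ (M ^ 4 + M ^ 3 + M ^ 2 + M) * (φ (x + t) - φ x) ∧
      φ (x + t) - φ x ≤ (M ^ 4 + M ^ 3 + M ^ 2 + M) * (φ x - φ (x - t)) := by
  have hM0 : (0:ℝ) ≤ M := by linarith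
  have hd : ∀ n : ℤ, 0 < a (n + 1) - a n := fun n => sub_pos.2 (ha (by omega))
  -- φ interpolates a at integers
  have hint : ∀ n : ℤ, φ n = a n := by
    intro n
    rw [hφ]
    simp
  -- cell bounds
  have hlow : ∀ x : ℝ, a ⌊x⌋ ≤ φ x := by
    intro x; rw [hφ]
    have h1 : (⌊x⌋ : ℝ) ≤ x := Int.floor_le x
    nlinarith [hd ⌊x⌋]
  have hhigh : ∀ x : ℝ, φ x ≤ a (⌊x⌋ + 1) := by
    intro x; rw [hφ]
    have h2 : x < ⌊x⌋ + 1 := Int.lt_floor_add_one x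
    nlinarith [hd ⌊x⌋]
  -- monotonicity
  have hmono : ∀ y z : ℝ, y ≤ z → φ y ≤ φ z := by
    intro y z hyz
    rcases eq_or_lt_of_le (Int.floor_le_floor hyz) with h | h
    · rw [hφ y, hφ z, h]
      nlinarith [hd ⌊z⌋]
    · have h1 := hhigh y
      have h2 := hlow z
      have h3 : a (⌊y⌋ + 1) ≤ a ⌊z⌋ := ha.monotone (by omega)
      linarith
  -- upper slope bound over at most two adjacent pieces
  have hUB : ∀ y z : ℝ, y ≤ z → ⌊z⌋ ≤ ⌊y⌋ + 1 →
      φ z - φ y ≤ M * (a (⌊z⌋ + 1) - a ⌊z⌋) * (z - y) := by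
    intro y z hyz hfl
    rcases eq_or_lt_of_le (Int.floor_le_floor hyz) with h | h
    · rw [hφ y, hφ z, ← h]
      nlinarith [hd ⌊y⌋, sub_nonneg.2 hyz,
        mul_nonneg (mul_nonneg (sub_nonneg.2 hM) (hd ⌊y⌋).le) (sub_nonneg.2 hyz)]
    · have hm : ⌊z⌋ = ⌊y⌋ + 1 := by omega
      have hq := (hqs (⌊y⌋ + 1) 1 le_rfl).1
      have e : ⌊y⌋ + 1 - 1 = ⌊y⌋ := by omega
      rw [e] at hq
      have hy1 : y < (⌊y⌋ : ℝ) + 1 := Int.lt_floor_add_one y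
      have hz1 : ((⌊y⌋ : ℝ) + 1) ≤ z := by
        have := Int.floor_le z
        rw [hm] at this
        push_cast at this
        linarith
      rw [hφ y, hφ z, hm]
      push_cast
      nlinarith [hd (⌊y⌋ + 1), hd ⌊y⌋,
        mul_le_mul_of_nonneg_right hq (by linarith : (0:ℝ) ≤ (⌊y⌋ : ℝ) + 1 - y),
        mul_nonneg (mul_nonneg (sub_nonneg.2 hM) (hd (⌊y⌋ + 1)).le)
          (by linarith : (0:ℝ) ≤ z - ((⌊y⌋ : ℝ) + 1))]
  -- lower slope bound over at most two adjacent pieces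
  have hLB : ∀ y z : ℝ, y ≤ z → ⌊z⌋ ≤ ⌊y⌋ + 1 →
      (a (⌊y⌋ + 1) - a ⌊y⌋) * (z - y) ≤ M * (φ z - φ y) := by
    intro y z hyz hfl
    rcases eq_or_lt_of_le (Int.floor_le_floor hyz) with h | h
    · rw [hφ y, hφ z, ← h]
      nlinarith [hd ⌊y⌋, sub_nonneg.2 hyz,
        mul_nonneg (mul_nonneg (sub_nonneg.2 hM) (hd ⌊y⌋).le) (sub_nonneg.2 hyz)]
    · have hm : ⌊z⌋ = ⌊y⌋ + 1 := by omega
      have hq := (hqs (⌊y⌋ + 1) 1 le_rfl).1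
      have e : ⌊y⌋ + 1 - 1 = ⌊y⌋ := by omega
      rw [e] at hq
      have hy1 : y < (⌊y⌋ : ℝ) + 1 := Int.lt_floor_add_one y
      have hz1 : ((⌊y⌋ : ℝ) + 1) ≤ z := by
        have := Int.floor_le z
        rw [hm] at this
        push_cast at this
        linarith
      rw [hφ y, hφ z, hm]
      push_cast
      nlinarith [hd (⌊y⌋ + 1), hd ⌊y⌋,
        mul_le_mul_of_nonneg_right hq (by linarith : (0:ℝ) ≤ z - ((⌊y⌋ : ℝ) + 1)),
        mul_nonneg (mul_nonneg (sub_nonneg.2 hM) (hd ⌊y⌋).le)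
          (by linarith : (0:ℝ) ≤ (⌊y⌋ : ℝ) + 1 - y)]
  -- key lemma: quasisymmetry for integer shifts
  have key : ∀ (x : ℝ) (k : ℤ), 1 ≤ k →
      φ x - φ (x - (k : ℝ)) ≤ M * (φ (x + (k : ℝ)) - φ x) ∧
      φ (x + (k : ℝ)) - φ x ≤ M * (φ x - φ (x - (k : ℝ))) := by
    intro x k hk
    have h1 : ⌊x + (k : ℝ)⌋ = ⌊x⌋ + k := Int.floor_add_intCast x k
    have h2 : ⌊x - (k : ℝ)⌋ = ⌊x⌋ - k := Int.floor_sub_intCast x k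
    have hs0 : (0:ℝ) ≤ x - ⌊x⌋ := sub_nonneg.2 (Int.floor_le x)
    have hs1 : x - ⌊x⌋ ≤ 1 := by linarith [Int.lt_floor_add_one x]
    have hq1 := hqs ⌊x⌋ k hk
    have hq2 := hqs (⌊x⌋ + 1) k hk
    have e1 : ⌊x⌋ + 1 - k = ⌊x⌋ - k + 1 := by omega
    have e2 : ⌊x⌋ + 1 + k = ⌊x⌋ + k + 1 := by omega
    rw [e1, e2] at hq2
    rw [hφ x, hφ (x + (k : ℝ)), hφ (x - (k : ℝ)), h1, h2]
    push_cast
    constructor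
    · nlinarith [mul_le_mul_of_nonneg_left hq1.1 (by linarith : (0:ℝ) ≤ 1 - (x - ⌊x⌋)),
        mul_le_mul_of_nonneg_left hq2.1 hs0]
    · nlinarith [mul_le_mul_of_nonneg_left hq1.2 (by linarith : (0:ℝ) ≤ 1 - (x - ⌊x⌋)),
        mul_le_mul_of_nonneg_left hq2.2 hs0]
  refine ⟨hint, ?_⟩
  intro x t ht
  rcases le_or_gt 1 t with ht1 | ht1
  · -- case t ≥ 1
    set k : ℤ := ⌊t⌋ with hkdef
    have hk1 : 1 ≤ k := Int.le_floor.mpr (by exact_mod_cast ht1)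
    have hk1' : (1:ℝ) ≤ (k : ℝ) := by exact_mod_cast hk1
    have hkt : (k : ℝ) ≤ t := Int.floor_le t
    have htk : t < (k : ℝ) + 1 := Int.lt_floor_add_one t
    have ht2k : t ≤ 2 * (k : ℝ) := by linarith
    have hkey2 := key x (2 * k) (by omega)
    push_cast at hkey2
    have hB1 := (key (x + (k : ℝ)) k hk1).2
    have eA : x + (k : ℝ) + k = x + 2 * k := by ring
    have eB : x + (k : ℝ) - k = x := by ring
    rw [eA, eB] at hB1
    have hB2 := (key (x - (k : ℝ)) k hk1).1
    have eC : x - (k : ℝ) + k = x := by ring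
    have eD : x - (k : ℝ) - k = x - 2 * k := by ring
    rw [eC, eD] at hB2
    have m1 : φ (x - 2 * k) ≤ φ (x - t) := hmono _ _ (by linarith)
    have m2 : φ (x + (k : ℝ)) ≤ φ (x + t) := hmono _ _ (by linarith)
    have m3 : φ (x - t) ≤ φ (x - (k : ℝ)) := hmono _ _ (by linarith)
    have m4 : φ (x + t) ≤ φ (x + 2 * k) := hmono _ _ (by linarith)
    have m5 : φ x ≤ φ (x + (k : ℝ)) := hmono _ _ (by linarith)
    have m6 : φ (x - (k : ℝ)) ≤ φ x := hmono _ _ (by linarith)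
    have hD : (0:ℝ) ≤ φ (x + t) - φ x := sub_nonneg.2 (hmono _ _ (by linarith))
    have hD' : (0:ℝ) ≤ φ x - φ (x - t) := sub_nonneg.2 (hmono _ _ (by linarith))
    constructor
    · -- φ x - φ (x-t) ≤ C (φ (x+t) - φ x)
      have g2 := hkey2.1
      have g4 : M * (φ (x + 2 * k) - φ x) ≤
          M * (M * (φ (x + (k : ℝ)) - φ x) + (φ (x + (k : ℝ)) - φ x)) :=
        mul_le_mul_of_nonneg_left (by linarith) hM0
      have g5 : M * (M * (φ (x + (k : ℝ)) - φ x) + (φ (x + (k : ℝ)) - φ x)) ≤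
          (M ^ 2 + M) * (φ (x + t) - φ x) := by
        have h1 : φ (x + (k : ℝ)) - φ x ≤ φ (x + t) - φ x := by linarith
        linarith [mul_le_mul_of_nonneg_left h1 (by nlinarith [pow_nonneg hM0 2] : (0:ℝ) ≤ M ^ 2 + M)]
      linarith [mul_nonneg (by nlinarith [pow_nonneg hM0 4, pow_nonneg hM0 3] : (0:ℝ) ≤ M ^ 4 + M ^ 3) hD, g2, g4, g5]
    · -- φ (x+t) - φ x ≤ C (φ x - φ (x-t))
      have g2 := hkey2.2
      have g4 : M * (φ x - φ (x - 2 * k)) ≤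
          M * (M * (φ x - φ (x - (k : ℝ))) + (φ x - φ (x - (k : ℝ)))) :=
        mul_le_mul_of_nonneg_left (by linarith) hM0
      have g5 : M * (M * (φ x - φ (x - (k : ℝ))) + (φ x - φ (x - (k : ℝ)))) ≤
          (M ^ 2 + M) * (φ x - φ (x - t)) := by
        have h1 : φ x - φ (x - (k : ℝ)) ≤ φ x - φ (x - t) := by linarith
        linarith [mul_le_mul_of_nonneg_left h1 (by nlinarith [pow_nonneg hM0 2] : (0:ℝ) ≤ M ^ 2 + M)]
      linarith [mul_nonneg (by nlinarith [pow_nonneg hM0 4, pow_nonneg hM0 3] : (0:ℝ) ≤ M ^ 4 + M ^ 3) hD', g2, g4, g5]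
  · -- case t < 1
    have hx0 : (⌊x⌋ : ℝ) ≤ x := Int.floor_le x
    have hx1 : x < (⌊x⌋ : ℝ) + 1 := Int.lt_floor_add_one x
    have hfl1 : ⌊x⌋ ≤ ⌊x - t⌋ + 1 := by
      have : (↑(⌊x⌋ - 1) : ℝ) ≤ x - t := by push_cast; linarith
      have := Int.le_floor.mpr this
      omega
    have hfl1' : ⌊x - t⌋ ≤ ⌊x⌋ := Int.floor_le_floor (by linarith)
    have hfl2 : ⌊x + t⌋ ≤ ⌊x⌋ + 1 := by
      have : x + t < (↑(⌊x⌋ + 2) : ℝ) := by push_cast; linarith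
      have := Int.floor_lt.mpr this
      omega
    have hfl2' : ⌊x⌋ ≤ ⌊x + t⌋ := Int.floor_le_floor (by linarith)
    have hD : (0:ℝ) ≤ φ (x + t) - φ x := sub_nonneg.2 (hmono _ _ (by linarith))
    have hD' : (0:ℝ) ≤ φ x - φ (x - t) := sub_nonneg.2 (hmono _ _ (by linarith))
    -- slope comparisons
    have hA : a (⌊x + t⌋ + 1) - a ⌊x + t⌋ ≤ M * (a (⌊x⌋ + 1) - a ⌊x⌋) := by
      rcases (by omega : ⌊x + t⌋ = ⌊x⌋ ∨ ⌊x + t⌋ = ⌊x⌋ + 1) with h | h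
      · rw [h]; nlinarith [hd ⌊x⌋]
      · rw [h]
        have hq := (hqs (⌊x⌋ + 1) 1 le_rfl).2
        have e : ⌊x⌋ + 1 - 1 = ⌊x⌋ := by omega
        rw [e] at hq
        linarith
    have hB : a (⌊x⌋ + 1) - a ⌊x⌋ ≤ M * (a (⌊x - t⌋ + 1) - a ⌊x - t⌋) := by
      rcases (by omega : ⌊x - t⌋ = ⌊x⌋ ∨ ⌊x - t⌋ = ⌊x⌋ - 1) with h | h
      · rw [h]; nlinarith [hd ⌊x⌋]
      · rw [h]
        have hq := (hqs ⌊x⌋ 1 le_rfl).2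
        have e : ⌊x⌋ - 1 + 1 = ⌊x⌋ := by omega
        rw [e]
        linarith
    have u1 := hUB (x - t) x (by linarith) hfl1
    have u2 := hUB x (x + t) (by linarith) hfl2
    have l1 := hLB (x - t) x (by linarith) hfl1
    have l2 := hLB x (x + t) (by linarith) hfl2
    constructor
    · -- φ x - φ (x-t) ≤ C (φ (x+t) - φ x)
      -- u1 : φ x - φ (x-t) ≤ M * d⌊x⌋ * t ;  l2 : d⌊x⌋ * t ≤ M * (φ(x+t) - φ x)
      have s1 : M * ((a (⌊x⌋ + 1) - a ⌊x⌋) * (x + t - x)) ≤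
          M * (M * (φ (x + t) - φ x)) := mul_le_mul_of_nonneg_left l2 hM0
      linarith [u1, s1, mul_nonneg (by nlinarith [pow_nonneg hM0 4, pow_nonneg hM0 3] : (0:ℝ) ≤ M ^ 4 + M ^ 3 + M) hD]
    · -- φ (x+t) - φ x ≤ C (φ x - φ (x-t))
      -- u2 : φ(x+t) - φ x ≤ M * d⌊x+t⌋ * t ; hA ; hB ; l1 : d⌊x-t⌋ * t ≤ M*(φx - φ(x-t))
      have s1 : M * (a (⌊x + t⌋ + 1) - a ⌊x + t⌋) * t ≤
          M * (M * (a (⌊x⌋ + 1) - a ⌊x⌋)) * t := by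
        nlinarith [mul_le_mul_of_nonneg_left hA hM0]
      have s2 : M * (M * (a (⌊x⌋ + 1) - a ⌊x⌋)) * t ≤
          M * (M * (M * (a (⌊x - t⌋ + 1) - a ⌊x - t⌋))) * t := by
        nlinarith [mul_le_mul_of_nonneg_left (mul_le_mul_of_nonneg_left hB hM0) hM0]
      have s3 : M * M * M * ((a (⌊x - t⌋ + 1) - a ⌊x - t⌋) * (x - (x - t))) ≤
          M * M * M * (M * (φ x - φ (x - t))) :=
        mul_le_mul_of_nonneg_left l1 (by positivity)
      linarith [u2, s1, s2, s3, mul_nonneg (by nlinarith [pow_nonneg hM0 3, pow_nonneg hM0 2] : (0:ℝ) ≤ M ^ 3 + M ^ 2 + M) hD']
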